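/- For $k \ge 3$, the bipartite incidence graph $D_k(q)$ has girth at least 8. -/

import Mathlib

/-- The moment-curve vector `(1, z, z^2, ..., z^(k-1))` in `F^k`. -/
def mvec (k : ℕ) {F : Type} [Field F] (z : F) : Fin k → F := fun j => z ^ (j : ℕ)

/-- The moment-curve line through `x` with direction parameter `z`. -/
def mline (k : ℕ) {F : Type} [Field F] (x : Fin k → F) (z : F) : Set (Fin k → F) :=
  {p | ∃ y : F, p = x + y • mvec k z}

/-- The bipartite point-line incidence graph `D_k(q)`. -/
def incGraph (k : ℕ) (F : Type) [Field F] :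
    SimpleGraph ((Fin k → F) ⊕ {L : Set (Fin k → F) // ∃ x z, L = mline k x z}) :=
  SimpleGraph.fromRel (fun a b =>
    match a, b with
    | Sum.inl p, Sum.inr L => p ∈ L.1
    | _, _ => False)

variable {F : Type} [Field F]


lemma indep2 {k : ℕ} (hk : 2 ≤ k) {z z' a b : F} (hzz : z ≠ z')
    (h : a • mvec k z + b • mvec k z' = 0) : a = 0 ∧ b = 0 := by
  have e0 := congrFun h ⟨0, by omega⟩
  have e1 := congrFun h ⟨1, by omega⟩
  simp only [mvec, Pi.add_apply, Pi.smul_apply, Pi.zero_apply, smul_eq_mul] at e0 e1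
  norm_num at e0 e1
  have ha : a * (z - z') = 0 := by linear_combination e1 - z' * e0
  have ha0 : a = 0 := by
    rcases mul_eq_zero.mp ha with h' | h'
    · exact h'
    · exact absurd (sub_eq_zero.mp h') hzz
  refine ⟨ha0, ?_⟩
  simpa [ha0] using e0

lemma indep3 {k : ℕ} (hk : 3 ≤ k) {z1 z2 z3 a b c : F} (h12 : z1 ≠ z2) (h13 : z1 ≠ z3)
    (h23 : z2 ≠ z3)
    (h : a • mvec k z1 + b • mvec k z2 + c • mvec k z3 = 0) : a = 0 ∧ b = 0 ∧ c = 0 := by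
  have e0 := congrFun h ⟨0, by omega⟩
  have e1 := congrFun h ⟨1, by omega⟩
  have e2 := congrFun h ⟨2, by omega⟩
  simp only [mvec, Pi.add_apply, Pi.smul_apply, Pi.zero_apply, smul_eq_mul] at e0 e1 e2
  norm_num [pow_succ] at e0 e1 e2
  have hc : c * ((z3 - z1) * (z3 - z2)) = 0 := by
    linear_combination e2 - (z1 + z2) * e1 + z1 * z2 * e0
  have hc0 : c = 0 := by
    rcases mul_eq_zero.mp hc with h' | h'
    · exact h'
    · rcases mul_eq_zero.mp h' with h'' | h''
      · exact absurd (sub_eq_zero.mp h'').symm h13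
      · exact absurd (sub_eq_zero.mp h'').symm h23
  have hb : b * (z2 - z1) = 0 := by linear_combination e1 - z1 * e0 + (z1 - z3) * hc0
  have hb0 : b = 0 := by
    rcases mul_eq_zero.mp hb with h' | h'
    · exact h'
    · exact absurd (sub_eq_zero.mp h').symm h12
  refine ⟨?_, hb0, hc0⟩
  linear_combination e0 - hb0 - hc0



/-- two lines with the same direction sharing a point are equal -/
lemma mline_eq_same {k : ℕ} {x x' : Fin k → F} {z : F} {p : Fin k → F}
    (h1 : p ∈ mline k x z) (h2 : p ∈ mline k x' z) : mline k x z = mline k x' z := by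
  obtain ⟨y, rfl⟩ := h1
  obtain ⟨y', hy'⟩ := h2
  have hx : x = x' + (y' - y) • mvec k z := by
    have := hy'
    apply_fun (fun q => q - y • mvec k z) at this
    simp only [add_sub_cancel_right] at this
    rw [this]; module
  ext q
  constructor
  · rintro ⟨t, rfl⟩
    exact ⟨t + (y' - y), by rw [hx]; module⟩
  · rintro ⟨t, rfl⟩
    exact ⟨t - (y' - y), by rw [hx]; module⟩

/-- two distinct points on two lines force the lines to be equal -/
lemma mline_eq_of_two {k : ℕ} (hk : 2 ≤ k) {x x' : Fin k → F} {z z' : F}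
    {p p' : Fin k → F} (hpp : p ≠ p')
    (h1 : p ∈ mline k x z) (h2 : p' ∈ mline k x z)
    (h3 : p ∈ mline k x' z') (h4 : p' ∈ mline k x' z') :
    mline k x z = mline k x' z' := by
  rcases eq_or_ne z z' with rfl | hzz
  · exact mline_eq_same h1 h3
  · obtain ⟨y1, rfl⟩ := h1
    obtain ⟨y2, hy2⟩ := h2
    obtain ⟨y3, hy3⟩ := h3
    obtain ⟨y4, hy4⟩ := h4
    have hdiff : (y1 - y2) • mvec k z + (-(y3 - y4)) • mvec k z' = 0 := by
      have : (x + y1 • mvec k z) - p' = (y1 - y2) • mvec k z := by rw [hy2]; module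
      have h2' : (x + y1 • mvec k z) - p' = (y3 - y4) • mvec k z' := by
        rw [hy3, hy4]; module
      rw [← this, h2']; module
    have := (indep2 hk hzz hdiff).1
    exact (hpp (by rw [hy2, sub_eq_zero.mp this])).elim

/-- no triangle of three pairwise distinct lines through pairwise distinct points -/
lemma no_triangle {k : ℕ} (hk : 3 ≤ k) {x1 x2 x3 : Fin k → F} {z1 z2 z3 : F}
    {q1 q2 q3 : Fin k → F} (h12 : q1 ≠ q2) (h13 : q1 ≠ q3) (h23 : q2 ≠ q3)
    (hL12 : mline k x1 z1 ≠ mline k x2 z2) (hL13 : mline k x1 z1 ≠ mline k x3 z3)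
    (hL23 : mline k x2 z2 ≠ mline k x3 z3)
    (m11 : q1 ∈ mline k x1 z1) (m21 : q2 ∈ mline k x1 z1)
    (m22 : q2 ∈ mline k x2 z2) (m32 : q3 ∈ mline k x2 z2)
    (m33 : q3 ∈ mline k x3 z3) (m13 : q1 ∈ mline k x3 z3) : False := by
  have hz12 : z1 ≠ z2 := fun h => hL12 (h ▸ mline_eq_same m21 (h ▸ m22))
  have hz13 : z1 ≠ z3 := fun h => hL13 (h ▸ mline_eq_same m11 (h ▸ m13))
  have hz23 : z2 ≠ z3 := fun h => hL23 (h ▸ mline_eq_same m32 (h ▸ m33))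
  obtain ⟨a1, ha1⟩ := m11
  obtain ⟨a2, ha2⟩ := m21
  obtain ⟨b2, hb2⟩ := m22
  obtain ⟨b3, hb3⟩ := m32
  obtain ⟨c3, hc3⟩ := m33
  obtain ⟨c1, hc1⟩ := m13
  have hsum : (a1 - a2) • mvec k z1 + (b2 - b3) • mvec k z2 + (c3 - c1) • mvec k z3 = 0 := by
    have e1 : q1 - q2 = (a1 - a2) • mvec k z1 := by rw [ha1, ha2]; module
    have e2 : q2 - q3 = (b2 - b3) • mvec k z2 := by rw [hb2, hb3]; module
    have e3 : q3 - q1 = (c3 - c1) • mvec k z3 := by rw [hc3, hc1]; module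
    rw [← e1, ← e2, ← e3]; module
  have h0 := (indep3 hk hz12 hz13 hz23 hsum).1
  apply h12
  rw [ha1, ha2, sub_eq_zero.mp h0]


variable {k : ℕ}


lemma adj_inl {p : Fin k → F} {v} (h : (incGraph k F).Adj (Sum.inl p) v) :
    ∃ L, v = Sum.inr L ∧ p ∈ L.1 := by
  rw [incGraph, SimpleGraph.fromRel_adj] at h
  cases v with
  | inl q => rcases h with ⟨-, h | h⟩ <;> exact h.elim
  | inr L => exact ⟨L, rfl, by rcases h with ⟨-, h | h⟩; exacts [h, h.elim]⟩

lemma adj_inr {L} {v} (h : (incGraph k F).Adj (Sum.inr L) v) :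
    ∃ p : Fin k → F, v = Sum.inl p ∧ p ∈ L.1 := by
  rw [incGraph, SimpleGraph.fromRel_adj] at h
  cases v with
  | inl q => exact ⟨q, rfl, by rcases h with ⟨-, h | h⟩; exacts [h.elim, h]⟩
  | inr M => rcases h with ⟨-, h | h⟩ <;> exact h.elim

lemma adj_mk {p : Fin k → F} {L} (h : p ∈ L.1) :
    (incGraph k F).Adj (Sum.inl p) (Sum.inr L) := by
  rw [incGraph, SimpleGraph.fromRel_adj]
  exact ⟨by simp, Or.inl h⟩

lemma adj_flip {u v} (h : (incGraph k F).Adj u v) : u.isLeft = !v.isLeft := by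
  cases u with
  | inl p => obtain ⟨L, rfl, -⟩ := adj_inl h; rfl
  | inr L => obtain ⟨p, rfl, -⟩ := adj_inr h; rfl

lemma walk_parity {u v} (w : (incGraph k F).Walk u v) :
    Even w.length ↔ (u.isLeft = v.isLeft) := by
  induction w with
  | nil => simp
  | cons h w ih =>
    rw [SimpleGraph.Walk.length_cons, Nat.even_add_one, ih, adj_flip h]
    constructor
    · intro hne
      cases hb : Sum.isLeft _ <;> simp_all
    · intro heq
      cases hb : Sum.isLeft _ <;> simp_all


lemma list_len4 {α : Type*} {l : List α} (h : l.length = 4) : ∃ a b c d, l = [a, b, c, d] := by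
  match l, h with | [a,b,c,d], _ => exact ⟨a,b,c,d,rfl⟩

lemma list_len6 {α : Type*} {l : List α} (h : l.length = 6) :
    ∃ a b c d e f, l = [a, b, c, d, e, f] := by
  match l, h with | [a,b,c,d,e,f], _ => exact ⟨a,b,c,d,e,f,rfl⟩

lemma keyBound (hk : 3 ≤ k) {a} (w : (incGraph k F).Walk a a) (hw : w.IsCycle) :
    8 ≤ w.length := by
  by_contra hlt
  push_neg at hlt
  have h3 := hw.three_le_length
  have heven : Even w.length := (walk_parity w).mpr rfl
  have hlen46 : w.length = 4 ∨ w.length = 6 := by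
    rcases heven with ⟨m, hm⟩; omega
  have hchain : List.IsChain (incGraph k F).Adj w.support := w.isChain_adj_support
  have hlast : w.support.getLast? = some a := by
    rw [List.getLast?_eq_getLast w.support_ne_nil, w.getLast_support]
  have hnd := hw.support_nodup
  have hlen : w.support.tail.length = w.length := by
    have := w.length_support
    have := List.length_tail (l := w.support)
    omega
  rw [w.support_eq_cons] at hchain hlast
  rcases hlen46 with h46 | h46
  · rw [h46] at hlen
    obtain ⟨v1, v2, v3, v4, hl⟩ := list_len4 hlen
    rw [hl] at hchain hlast hnd
    simp only [List.isChain_cons_cons, List.isChain_singleton, and_true] at hchain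
    obtain ⟨h1, h2, h3', h4⟩ := hchain
    have hv4 : v4 = a := by simpa using hlast
    subst hv4
    simp only [List.nodup_cons, List.mem_cons, List.mem_singleton, List.not_mem_nil,
      or_false, not_or, List.nodup_nil, and_true] at hnd
    cases v4 with
    | inl p1 =>
      obtain ⟨L1, rfl, m1⟩ := adj_inl h1
      obtain ⟨p2, rfl, m2⟩ := adj_inr h2
      obtain ⟨L2, rfl, m3⟩ := adj_inl h3'
      obtain ⟨p', heq, m4⟩ := adj_inr h4
      injection heq with heq; subst heq
      simp only [Sum.inl.injEq, Sum.inr.injEq] at hnd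
      have hLL : L1 ≠ L2 := by tauto
      have hpp : p1 ≠ p2 := by intro h; subst h; tauto
      obtain ⟨x1, z1, hx1⟩ := L1.2
      obtain ⟨x2, z2, hx2⟩ := L2.2
      rw [hx1] at m1 m2
      rw [hx2] at m3 m4
      exact hLL (Subtype.ext (by rw [hx1, hx2]; exact mline_eq_of_two (by omega) hpp m1 m2 m4 m3))
    | inr L1 =>
      obtain ⟨p1, rfl, m1⟩ := adj_inr h1
      obtain ⟨L2, rfl, m2⟩ := adj_inl h2
      obtain ⟨p2, rfl, m3⟩ := adj_inr h3'
      obtain ⟨L', heq, m4⟩ := adj_inl h4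
      injection heq with heq; subst heq
      simp only [Sum.inl.injEq, Sum.inr.injEq] at hnd
      have hLL : L1 ≠ L2 := by intro h; subst h; tauto
      have hpp : p1 ≠ p2 := by tauto
      obtain ⟨x1, z1, hx1⟩ := L1.2
      obtain ⟨x2, z2, hx2⟩ := L2.2
      rw [hx1] at m1 m4
      rw [hx2] at m2 m3
      exact hLL (Subtype.ext (by rw [hx1, hx2]; exact mline_eq_of_two (by omega) hpp m1 m4 m2 m3))
  · rw [h46] at hlen
    obtain ⟨v1, v2, v3, v4, v5, v6, hl⟩ := list_len6 hlen
    rw [hl] at hchain hlast hnd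
    simp only [List.isChain_cons_cons, List.isChain_singleton, and_true] at hchain
    obtain ⟨h1, h2, h3', h4, h5, h6⟩ := hchain
    have hv6 : v6 = a := by simpa using hlast
    subst hv6
    simp only [List.nodup_cons, List.mem_cons, List.mem_singleton, List.not_mem_nil,
      or_false, not_or, List.nodup_nil, and_true] at hnd
    cases v6 with
    | inl p1 =>
      obtain ⟨L1, rfl, m1⟩ := adj_inl h1
      obtain ⟨p2, rfl, m2⟩ := adj_inr h2
      obtain ⟨L2, rfl, m3⟩ := adj_inl h3'
      obtain ⟨p3, rfl, m4⟩ := adj_inr h4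
      obtain ⟨L3, rfl, m5⟩ := adj_inl h5
      obtain ⟨p', heq, m6⟩ := adj_inr h6
      injection heq with heq; subst heq
      obtain ⟨x1, z1, hx1⟩ := L1.2
      obtain ⟨x2, z2, hx2⟩ := L2.2
      obtain ⟨x3, z3, hx3⟩ := L3.2
      simp only [Sum.inl.injEq, Sum.inr.injEq] at hnd
      have hL12 : L1 ≠ L2 := by tauto
      have hL13 : L1 ≠ L3 := by tauto
      have hL23 : L2 ≠ L3 := by tauto
      have hp12 : p1 ≠ p2 := by intro h; subst h; tauto
      have hp13 : p1 ≠ p3 := by intro h; subst h; tauto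
      have hp23 : p2 ≠ p3 := by tauto
      rw [hx1] at m1 m2
      rw [hx2] at m3 m4
      rw [hx3] at m5 m6
      refine no_triangle hk hp12 hp13 hp23 ?_ ?_ ?_ m1 m2 m3 m4 m5 m6
      · exact fun h => hL12 (Subtype.ext (hx1 ▸ hx2 ▸ h))
      · exact fun h => hL13 (Subtype.ext (hx1 ▸ hx3 ▸ h))
      · exact fun h => hL23 (Subtype.ext (hx2 ▸ hx3 ▸ h))
    | inr L1 =>
      obtain ⟨p1, rfl, m1⟩ := adj_inr h1
      obtain ⟨L2, rfl, m2⟩ := adj_inl h2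
      obtain ⟨p2, rfl, m3⟩ := adj_inr h3'
      obtain ⟨L3, rfl, m4⟩ := adj_inl h4
      obtain ⟨p3, rfl, m5⟩ := adj_inr h5
      obtain ⟨L', heq, m6⟩ := adj_inl h6
      injection heq with heq; subst heq
      obtain ⟨x1, z1, hx1⟩ := L1.2
      obtain ⟨x2, z2, hx2⟩ := L2.2
      obtain ⟨x3, z3, hx3⟩ := L3.2
      simp only [Sum.inl.injEq, Sum.inr.injEq] at hnd
      have hL12 : L1 ≠ L2 := by intro h; subst h; tauto
      have hL13 : L1 ≠ L3 := by intro h; subst h; tauto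
      have hL23 : L2 ≠ L3 := by tauto
      have hp12 : p1 ≠ p2 := by tauto
      have hp13 : p1 ≠ p3 := by tauto
      have hp23 : p2 ≠ p3 := by tauto
      rw [hx1] at m1 m6
      rw [hx2] at m2 m3
      rw [hx3] at m4 m5
      refine no_triangle hk hp13.symm hp23.symm hp12 ?_ ?_ ?_ m6 m1 m2 m3 m4 m5
      · exact fun h => hL12 (Subtype.ext (hx1 ▸ hx2 ▸ h))
      · exact fun h => hL13 (Subtype.ext (hx1 ▸ hx3 ▸ h))
      · exact fun h => hL23 (Subtype.ext (hx2 ▸ hx3 ▸ h))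


lemma not_acyclic (hk : 3 ≤ k) (F : Type) [Field F] : ¬ (incGraph k F).IsAcyclic := by
  intro h
  rw [SimpleGraph.isAcyclic_iff_path_unique] at h
  have hk0 : 0 < k := by omega
  have hk1 : 1 < k := by omega
  set p1 : Fin k → F := 0 with hp1
  set p2 : Fin k → F := mvec k (0 : F) with hp2
  set p3 : Fin k → F := mvec k (0 : F) + mvec k 1 with hp3
  set p4 : Fin k → F := mvec k (1 : F) with hp4
  set L1 : {L : Set (Fin k → F) // ∃ x z, L = mline k x z} := ⟨mline k 0 0, 0, 0, rfl⟩ with hL1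
  set L2 : {L : Set (Fin k → F) // ∃ x z, L = mline k x z} := ⟨mline k p2 1, p2, 1, rfl⟩ with hL2
  set L3 : {L : Set (Fin k → F) // ∃ x z, L = mline k x z} := ⟨mline k p3 0, p3, 0, rfl⟩ with hL3
  set L4 : {L : Set (Fin k → F) // ∃ x z, L = mline k x z} := ⟨mline k 0 1, 0, 1, rfl⟩ with hL4
  -- memberships
  have m11 : p1 ∈ L1.1 := ⟨0, by simp [hp1]⟩
  have m21 : p2 ∈ L1.1 := ⟨1, by simp [hp2]⟩
  have m22 : p2 ∈ L2.1 := ⟨0, by simp⟩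
  have m32 : p3 ∈ L2.1 := ⟨1, by simp [hp3, hp2, hp4]⟩
  have m33 : p3 ∈ L3.1 := ⟨0, by simp⟩
  have m43 : p4 ∈ L3.1 := ⟨-1, by rw [hp4, hp3, hp4]; module⟩
  have m44 : p4 ∈ L4.1 := ⟨1, by simp [hp4]⟩
  have m14 : p1 ∈ L4.1 := ⟨0, by simp [hp1]⟩
  -- coordinate computations
  have hmv0 : mvec k (0:F) ⟨1, hk1⟩ = 0 := by norm_num [mvec]
  have hmv1 : mvec k (1:F) ⟨1, hk1⟩ = 1 := by norm_num [mvec]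
  have hmv0' : mvec k (0:F) ⟨0, hk0⟩ = 1 := by norm_num [mvec]
  have hmv1' : mvec k (1:F) ⟨0, hk0⟩ = 1 := by norm_num [mvec]
  -- point distinctness
  have hp12 : p1 ≠ p2 := by
    intro h'
    have := congrFun h' ⟨0, hk0⟩
    simp [hp1, hp2, hmv0'] at this
  have hp13 : p1 ≠ p3 := by
    intro h'
    have := congrFun h' ⟨1, hk1⟩
    simp [hp1, hp3, hp4, hmv0, hmv1] at this
  have hp23 : p2 ≠ p3 := by
    intro h'
    have := congrFun h' ⟨1, hk1⟩
    simp [hp2, hp3, hp4, hmv0, hmv1] at this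
  have hp14 : p1 ≠ p4 := by
    intro h'
    have := congrFun h' ⟨1, hk1⟩
    simp [hp1, hp4, hmv1] at this
  have hp34 : p3 ≠ p4 := by
    intro h'
    have := congrFun h' ⟨0, hk0⟩
    simp [hp3, hp4, hp2, hmv0', hmv1'] at this
  -- line distinctness (as subtype elements)
  have hnotL1 : p3 ∉ (L1 : {L : Set (Fin k → F) // ∃ x z, L = mline k x z}).1 := by
    rintro ⟨y, hy⟩
    have := congrFun hy ⟨1, hk1⟩
    simp [hp3, hp4, hmv0, hmv1] at this
  have hnotL1' : p4 ∉ (L1 : {L : Set (Fin k → F) // ∃ x z, L = mline k x z}).1 := by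
    rintro ⟨y, hy⟩
    have := congrFun hy ⟨1, hk1⟩
    simp [hp4, hmv0, hmv1] at this
  have hnotL3 : p1 ∉ (L3 : {L : Set (Fin k → F) // ∃ x z, L = mline k x z}).1 := by
    rintro ⟨y, hy⟩
    have := congrFun hy ⟨1, hk1⟩
    simp [hp1, hp3, hp4, hmv0, hmv1] at this
  have hL12 : L1 ≠ L2 := fun h' => hnotL1 (by rw [h']; exact m32)
  have hL14 : L1 ≠ L4 := fun h' => hnotL1' (by rw [h']; exact m44)
  have hL34 : L3 ≠ L4 := fun h' => hnotL3 (by rw [h']; exact m14)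
  -- the two paths
  let P : (incGraph k F).Walk (Sum.inl p1) (Sum.inl p3) :=
    .cons (adj_mk m11) (.cons (adj_mk m21).symm (.cons (adj_mk m22) (.cons (adj_mk m32).symm .nil)))
  let Q : (incGraph k F).Walk (Sum.inl p1) (Sum.inl p3) :=
    .cons (adj_mk m14) (.cons (adj_mk m44).symm (.cons (adj_mk m43) (.cons (adj_mk m33).symm .nil)))
  have hP : P.IsPath := by
    refine SimpleGraph.Walk.IsPath.mk' ?_
    simp only [P, SimpleGraph.Walk.support_cons, SimpleGraph.Walk.support_nil]
    simp [List.nodup_cons, hp12, hp13, hp23, hL12]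
  have hQ : Q.IsPath := by
    refine SimpleGraph.Walk.IsPath.mk' ?_
    simp only [Q, SimpleGraph.Walk.support_cons, SimpleGraph.Walk.support_nil]
    simp [List.nodup_cons, hp14, hp13, hp34.symm, hL34.symm]
  have := h ⟨P, hP⟩ ⟨Q, hQ⟩
  have hPQ : P = Q := Subtype.mk_eq_mk.mp this
  have hsup := congrArg SimpleGraph.Walk.support hPQ
  simp only [P, Q, SimpleGraph.Walk.support_cons, SimpleGraph.Walk.support_nil] at hsup
  have h2 : L1 = L4 := by
    simp only [List.cons.injEq, Sum.inr.injEq] at hsup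
    exact hsup.2.1
  exact hL14 h2

/-- For `k ≥ 3`, the incidence graph `D_k(q)` has girth at least 8. -/
theorem stmt_17 (k : ℕ) (hk : 3 ≤ k) (F : Type) [Field F] [Fintype F] :
    8 ≤ (incGraph k F).girth := by
  obtain ⟨a, w, hw, hg⟩ := SimpleGraph.exists_girth_eq_length.mpr (not_acyclic hk F)
  rw [hg]
  exact keyBound hk w hw
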